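/- arXiv:2101.08524 — 5 statements merged into one kernel-verified Lean document; each statement's English description precedes it below -/
import Mathlib

section
/- Let E ∈ ℝ^{3×3} and t ∈ ℝ³ with tᵀt = 1 satisfy E Eᵀ = [t]× [t]×ᵀ. Then there exists R ∈ SO(3) such that E = [t]× R. Consequently, the set of normalized essential matrices coincides with { E ∈ ℝ^{3×3} : ∃ t ∈ ℝ³, E Eᵀ = [t]× [t]×ᵀ and tᵀt = 1 }. -/
open Matrix

/-- The skew-symmetric cross-product matrix `[t]×` of `t ∈ ℝ³`. -/
noncomputable def skew (t : Fin 3 → ℝ) : Matrix (Fin 3) (Fin 3) ℝ :=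
  !![0, -t 2, t 1; t 2, 0, -t 0; -t 1, t 0, 0]

section Helpers

variable {R : Type*} [CommRing R]

private lemma vmv_mul {n m : Type*} [Fintype n] [Fintype m] (a : n → R) (b : m → R)
    (M : Matrix m m R) : vecMulVec a b * M = vecMulVec a (Mᵀ *ᵥ b) := by
  ext i j
  simp only [mul_apply, vecMulVec_apply, mulVec, dotProduct, transpose_apply]
  rw [Finset.mul_sum]
  exact Finset.sum_congr rfl fun k _ => by ring

private lemma mul_vmv {n m : Type*} [Fintype n] [Fintype m] (M : Matrix n n R) (a : n → R)
    (b : m → R) : M * vecMulVec a b = vecMulVec (M *ᵥ a) b := by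
  ext i j
  simp only [mul_apply, vecMulVec_apply, mulVec, dotProduct]
  rw [Finset.sum_mul]
  exact Finset.sum_congr rfl fun k _ => by ring

private lemma vmv_mulVec {n m : Type*} [Fintype m] (a : n → R) (b : m → R) (v : m → R) :
    vecMulVec a b *ᵥ v = (b ⬝ᵥ v) • a := by
  funext i
  simp only [mulVec, dotProduct, vecMulVec_apply, Pi.smul_apply, smul_eq_mul]
  rw [Finset.sum_mul]
  exact Finset.sum_congr rfl fun k _ => by ring

private lemma vmv_transpose {n m : Type*} (a : n → R) (b : m → R) :
    (vecMulVec a b)ᵀ = vecMulVec b a := by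
  ext i j; simp [vecMulVec_apply, mul_comm]

private lemma vmv_mul_vmv {n m k : Type*} [Fintype m] (a : n → R) (b c : m → R) (d : k → R) :
    vecMulVec a b * vecMulVec c d = (b ⬝ᵥ c) • vecMulVec a d := by
  ext i j
  simp only [mul_apply, vecMulVec_apply, dotProduct, Matrix.smul_apply, smul_eq_mul]
  rw [Finset.sum_mul]
  exact Finset.sum_congr rfl fun k _ => by ring

private lemma vmv_zero_left {n m : Type*} (b : m → R) :
    vecMulVec (0 : n → R) b = 0 := by ext i j; simp [vecMulVec_apply]

private lemma vmv_zero_right {n m : Type*} (a : n → R) :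
    vecMulVec a (0 : m → R) = 0 := by ext i j; simp [vecMulVec_apply]

private lemma trace_vmv {n : Type*} [Fintype n] (a b : n → R) :
    trace (vecMulVec a b) = a ⬝ᵥ b := by
  simp [trace, Matrix.diag, vecMulVec_apply, dotProduct]

private lemma eq_zero_of_trace_tmul (B : Matrix (Fin 3) (Fin 3) ℝ) (h : trace (Bᵀ * B) = 0) :
    B = 0 := by
  have h' : ∑ j : Fin 3, ∑ i : Fin 3, (B i j) ^ 2 = 0 := by
    rw [← h]
    simp [trace, Matrix.diag, mul_apply, sq]
  ext i j
  have h1 := (Finset.sum_eq_zero_iff_of_nonneg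
    (fun j _ => Finset.sum_nonneg fun i _ => sq_nonneg (B i j))).1 h' j (Finset.mem_univ j)
  have h2 := (Finset.sum_eq_zero_iff_of_nonneg
    (fun i _ => sq_nonneg (B i j))).1 h1 i (Finset.mem_univ i)
  simpa using pow_eq_zero_iff (n := 2) (by norm_num) |>.1 h2

private lemma skew_mulVec (t : Fin 3 → ℝ) : skew t *ᵥ t = 0 := by
  funext i
  fin_cases i <;>
    simp [skew, mulVec, dotProduct, Fin.sum_univ_three] <;> ring

private lemma det_skew (t : Fin 3 → ℝ) : (skew t).det = 0 := by
  simp [skew, det_fin_three]; ring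

private lemma adj_skew (t : Fin 3 → ℝ) : adjugate (skew t) = vecMulVec t t := by
  rw [skew, adjugate_fin_three_of]
  ext i j
  fin_cases i <;> fin_cases j <;> simp [vecMulVec_apply] <;> ring

private lemma skew_transpose (t : Fin 3 → ℝ) : (skew t)ᵀ = -(skew t) := by
  ext i j
  fin_cases i <;> fin_cases j <;> simp [skew, transpose_apply]

private lemma skew_mul_transpose (t : Fin 3 → ℝ) (ht : t ⬝ᵥ t = 1) :
    skew t * (skew t)ᵀ = 1 - vecMulVec t t := by
  have ht' : t 0 ^ 2 + t 1 ^ 2 + t 2 ^ 2 = 1 := by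
    simpa [dotProduct, Fin.sum_univ_three, sq] using ht
  rw [skew_transpose]
  ext i j
  fin_cases i <;> fin_cases j <;>
    simp [skew, mul_apply, vecMulVec_apply, Fin.sum_univ_three, one_apply] <;>
    first | ring1 | linear_combination ht'

end Helpers

private lemma essential_aux (E : Matrix (Fin 3) (Fin 3) ℝ) (t : Fin 3 → ℝ)
    (ht : t ⬝ᵥ t = 1) (h : E * Eᵀ = skew t * (skew t)ᵀ) :
    ∃ R : Matrix (Fin 3) (Fin 3) ℝ, Rᵀ * R = 1 ∧ R.det = 1 ∧ E = skew t * R := by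
  set S := skew t with hS
  have hSST : S * Sᵀ = 1 - vecMulVec t t := skew_mul_transpose t ht
  have hSt : S *ᵥ t = 0 := skew_mulVec t
  have hEET : E * Eᵀ = 1 - vecMulVec t t := h.trans hSST
  -- det E = 0
  have hdetE : E.det = 0 := by
    have h2 : E.det * E.det = 0 := by
      have hd := congrArg det h
      rw [hS] at hd
      rw [det_mul, det_mul, det_transpose, det_transpose, det_skew, mul_zero] at hd
      exact hd
    exact mul_self_eq_zero.mp h2
  set G := adjugate E with hG
  have hEG : E * G = 0 := by rw [hG, mul_adjugate, hdetE, zero_smul]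
  have hGE : G * E = 0 := by rw [hG, adjugate_mul, hdetE, zero_smul]
  -- Eᵀ t = 0
  have hEt : Eᵀ *ᵥ t = 0 := by
    rw [← dotProduct_self_eq_zero]
    have key : (Eᵀ *ᵥ t) ⬝ᵥ (Eᵀ *ᵥ t) = t ⬝ᵥ ((E * Eᵀ) *ᵥ t) := by
      rw [mulVec_transpose, ← dotProduct_mulVec, ← mulVec_transpose, mulVec_mulVec]
    rw [key, hEET, sub_mulVec, one_mulVec, vmv_mulVec, ht, one_smul, sub_self,
      dotProduct_zero]
  have hEtt : Eᵀ * vecMulVec t t = 0 := by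
    rw [mul_vmv, hEt, vmv_zero_left]
  have httE : vecMulVec t t * E = 0 := by
    rw [vmv_mul, hEt, vmv_zero_right]
  -- G ttᵀ = G
  have hGtt : G * vecMulVec t t = G := by
    have hvt : vecMulVec t t = 1 - E * Eᵀ := by rw [hEET]; noncomm_ring
    rw [hvt, mul_sub, mul_one, ← mul_assoc, hGE, zero_mul, sub_zero]
  -- Gᵀ G = ttᵀ
  have hGTG : Gᵀ * G = vecMulVec t t := by
    calc Gᵀ * G = adjugate Eᵀ * adjugate E := by rw [hG, adjugate_transpose]
    _ = adjugate (E * Eᵀ) := (adjugate_mul_distrib E Eᵀ).symm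
    _ = adjugate Sᵀ * adjugate S := by rw [h, adjugate_mul_distrib]
    _ = (vecMulVec t t)ᵀ * vecMulVec t t := by rw [← adjugate_transpose, adj_skew]
    _ = vecMulVec t t := by rw [vmv_transpose, vmv_mul_vmv, ht, one_smul]
  -- idempotents
  have hM : Eᵀ * E * (Eᵀ * E) = Eᵀ * E := by
    calc Eᵀ * E * (Eᵀ * E) = Eᵀ * (E * Eᵀ) * E := by noncomm_ring
    _ = Eᵀ * E - Eᵀ * vecMulVec t t * E := by rw [hEET]; noncomm_ring
    _ = Eᵀ * E := by rw [hEtt, zero_mul, sub_zero]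
  have hGG : G * Gᵀ * (G * Gᵀ) = G * Gᵀ := by
    calc G * Gᵀ * (G * Gᵀ) = G * (Gᵀ * G) * Gᵀ := by noncomm_ring
    _ = G * vecMulVec t t * Gᵀ := by rw [hGTG]
    _ = G * Gᵀ := by rw [hGtt]
  have hMGG : Eᵀ * E * (G * Gᵀ) = 0 := by
    calc Eᵀ * E * (G * Gᵀ) = Eᵀ * (E * G) * Gᵀ := by noncomm_ring
    _ = 0 := by rw [hEG, mul_zero, zero_mul]
  have hGGM : G * Gᵀ * (Eᵀ * E) = 0 := by
    calc G * Gᵀ * (Eᵀ * E) = G * (E * G)ᵀ * E := by rw [transpose_mul]; noncomm_ring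
    _ = 0 := by rw [hEG, transpose_zero, mul_zero, zero_mul]
  set A := Eᵀ * E + G * Gᵀ with hA
  have hAA : A * A = A := by
    calc A * A = Eᵀ * E * (Eᵀ * E) + Eᵀ * E * (G * Gᵀ) + G * Gᵀ * (Eᵀ * E)
        + G * Gᵀ * (G * Gᵀ) := by rw [hA]; noncomm_ring
    _ = A := by rw [hM, hGG, hMGG, hGGM, hA]; abel
  have hAT : Aᵀ = A := by
    rw [hA, transpose_add, transpose_mul, transpose_mul, transpose_transpose,
      transpose_transpose]
  have htrA : trace A = 3 := by
    have h1 : trace (Eᵀ * E) = 2 := by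
      rw [trace_mul_comm, hEET, trace_sub, trace_one, trace_vmv, ht]
      norm_num
    have h2 : trace (G * Gᵀ) = 1 := by
      rw [trace_mul_comm, hGTG, trace_vmv, ht]
    rw [hA, trace_add, h1, h2]
    norm_num
  have hA1 : A = 1 := by
    have hB : (1 - A)ᵀ * (1 - A) = 1 - A := by
      rw [transpose_sub, transpose_one, hAT]
      calc (1 - A) * (1 - A) = 1 - A - A + A * A := by noncomm_ring
      _ = 1 - A := by rw [hAA]; noncomm_ring
    have htrB : trace ((1 - A)ᵀ * (1 - A)) = 0 := by
      rw [hB, trace_sub, trace_one, htrA]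
      norm_num
    have h0 := eq_zero_of_trace_tmul _ htrB
    exact (sub_eq_zero.mp h0).symm
  -- the rotation
  set c := G *ᵥ t with hc
  have hcc : vecMulVec c c = G * Gᵀ := by
    calc vecMulVec c c = G * vecMulVec t c := by rw [mul_vmv]
    _ = G * (vecMulVec t t * Gᵀ) := by rw [vmv_mul, transpose_transpose]
    _ = G * vecMulVec t t * Gᵀ := by noncomm_ring
    _ = G * Gᵀ := by rw [hGtt]
  have hcdot : c ⬝ᵥ c = 1 := by
    have := congrArg trace hcc
    rw [trace_vmv, trace_mul_comm, hGTG, trace_vmv, ht] at this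
    exact this
  set Rm := Sᵀ * E + vecMulVec t c with hR
  have hSvmv : S * vecMulVec t c = 0 := by rw [mul_vmv, hSt, vmv_zero_left]
  have hSR : S * Rm = E := by
    calc S * Rm = S * Sᵀ * E + S * vecMulVec t c := by rw [hR]; noncomm_ring
    _ = E - vecMulVec t t * E + 0 := by rw [hSST, hSvmv]; noncomm_ring
    _ = E := by rw [httE]; noncomm_ring
  have hRT : Rmᵀ = Eᵀ * S + vecMulVec c t := by
    rw [hR, transpose_add, transpose_mul, transpose_transpose, vmv_transpose]
  have hRTR : Rmᵀ * Rm = 1 := by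
    have hT1 : Eᵀ * S * (Sᵀ * E) = Eᵀ * E := by
      calc Eᵀ * S * (Sᵀ * E) = Eᵀ * (S * Sᵀ) * E := by noncomm_ring
      _ = Eᵀ * E - Eᵀ * vecMulVec t t * E := by rw [hSST]; noncomm_ring
      _ = Eᵀ * E := by rw [hEtt, zero_mul, sub_zero]
    have hT2 : Eᵀ * S * vecMulVec t c = 0 := by
      rw [mul_assoc, hSvmv, mul_zero]
    have hT3 : vecMulVec c t * (Sᵀ * E) = 0 := by
      rw [← mul_assoc, vmv_mul, transpose_transpose, hSt, vmv_zero_right, zero_mul]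
    have hT4 : vecMulVec c t * vecMulVec t c = G * Gᵀ := by
      rw [vmv_mul_vmv, ht, one_smul, hcc]
    calc Rmᵀ * Rm = Eᵀ * S * (Sᵀ * E) + Eᵀ * S * vecMulVec t c
        + vecMulVec c t * (Sᵀ * E) + vecMulVec c t * vecMulVec t c := by
          rw [hRT, hR]; noncomm_ring
    _ = Eᵀ * E + G * Gᵀ := by rw [hT1, hT2, hT3, hT4]; abel
    _ = 1 := hA1
  have hRRT : Rm * Rmᵀ = 1 := mul_eq_one_comm.mp hRTR
  have hadjR : adjugate Rm = Rm.det • Rmᵀ := by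
    calc adjugate Rm = adjugate Rm * (Rm * Rmᵀ) := by rw [hRRT, mul_one]
    _ = adjugate Rm * Rm * Rmᵀ := by noncomm_ring
    _ = Rm.det • Rmᵀ := by rw [adjugate_mul, smul_mul_assoc, one_mul]
  have hRTt : Rmᵀ *ᵥ t = c := by
    rw [hRT, add_mulVec, ← mulVec_mulVec, hSt, mulVec_zero, vmv_mulVec, ht, one_smul,
      zero_add]
  have hGRc : G = Rm.det • vecMulVec c t := by
    calc G = adjugate (S * Rm) := by rw [hSR]
    _ = adjugate Rm * adjugate S := adjugate_mul_distrib _ _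
    _ = (Rm.det • Rmᵀ) * vecMulVec t t := by rw [hadjR, adj_skew]
    _ = Rm.det • (Rmᵀ * vecMulVec t t) := by rw [smul_mul_assoc]
    _ = Rm.det • vecMulVec c t := by rw [mul_vmv, hRTt]
  have hdetR : Rm.det = 1 := by
    have hcv : c = Rm.det • c := by
      calc c = G *ᵥ t := hc
      _ = Rm.det • (vecMulVec c t *ᵥ t) := by rw [hGRc, smul_mulVec]
      _ = Rm.det • c := by rw [vmv_mulVec, ht, one_smul]
    have h5 : (1 : ℝ) = Rm.det := by
      simpa [dotProduct_smul, hcdot] using congrArg (fun v => c ⬝ᵥ v) hcv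
    exact h5.symm
  exact ⟨Rm, hRTR, hdetR, hSR.symm⟩

/-- If `E Eᵀ = [t]× [t]×ᵀ` with `tᵀ t = 1`, then `E = [t]× R` for some `R ∈ SO(3)`.
Consequently, the set of normalized essential matrices coincides with
`{ E : ∃ t, E Eᵀ = [t]× [t]×ᵀ ∧ tᵀ t = 1 }`. -/
theorem essential_matrix_characterization :
    (∀ (E : Matrix (Fin 3) (Fin 3) ℝ) (t : Fin 3 → ℝ), t ⬝ᵥ t = 1 →
      E * Eᵀ = skew t * (skew t)ᵀ →
      ∃ R : Matrix (Fin 3) (Fin 3) ℝ, Rᵀ * R = 1 ∧ R.det = 1 ∧ E = skew t * R) ∧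
    {E : Matrix (Fin 3) (Fin 3) ℝ |
        ∃ (t : Fin 3 → ℝ) (R : Matrix (Fin 3) (Fin 3) ℝ),
          t ⬝ᵥ t = 1 ∧ Rᵀ * R = 1 ∧ R.det = 1 ∧ E = skew t * R} =
      {E : Matrix (Fin 3) (Fin 3) ℝ |
        ∃ t : Fin 3 → ℝ, E * Eᵀ = skew t * (skew t)ᵀ ∧ t ⬝ᵥ t = 1} := by
  constructor
  · exact essential_aux
  · ext E
    simp only [Set.mem_setOf_eq]
    constructor
    · rintro ⟨t, R, ht, hR1, -, rfl⟩
      refine ⟨t, ?_, ht⟩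
      have hRRT : R * Rᵀ = 1 := mul_eq_one_comm.mp hR1
      calc skew t * R * (skew t * R)ᵀ = skew t * (R * Rᵀ) * (skew t)ᵀ := by
            rw [transpose_mul]; noncomm_ring
      _ = skew t * (skew t)ᵀ := by rw [hRRT, mul_one]
    · rintro ⟨t, hE, ht⟩
      obtain ⟨R, h1, h2, h3⟩ := essential_aux E t ht hE
      exact ⟨t, R, ht, h1, h2, h3⟩
end

section
/- There exist E ∈ ℝ^{3×3} and t ∈ ℝ³ satisfying the six relaxed constraints h₁(E,t) = h₂(E,t) = h₃(E,t) = h₄(E,t) = h₅(E,t) = h₆(E,t) = 0 such that E is not a normalized essential matrix, i.e. there are no s ∈ ℝ³ with sᵀs = 1 and R ∈ SO(3) with E = [s]× R. Hence the relaxed set { (E,t) : hᵢ(E,t) = 0, i = 1,…,6 } is a strict superset of the set of normalized essential matrices. -/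
open Matrix

/-- The six relaxed constraint functions `h₁,…,h₆` all vanish at `(E, t)`. -/
def RelaxedConstraints (E : Matrix (Fin 3) (Fin 3) ℝ) (t : Fin 3 → ℝ) : Prop :=
  t ⬝ᵥ t - 1 = 0 ∧
  E 0 ⬝ᵥ E 0 - (t 1 ^ 2 + t 2 ^ 2) = 0 ∧
  E 1 ⬝ᵥ E 1 - (t 0 ^ 2 + t 2 ^ 2) = 0 ∧
  E 2 ⬝ᵥ E 2 - (t 0 ^ 2 + t 1 ^ 2) = 0 ∧
  E 0 ⬝ᵥ E 2 + t 0 * t 2 = 0 ∧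
  E 1 ⬝ᵥ E 2 + t 1 * t 2 = 0

/-- `E` is a normalized essential matrix. -/
def IsNormalizedEssential (E : Matrix (Fin 3) (Fin 3) ℝ) : Prop :=
  ∃ (s : Fin 3 → ℝ) (R : Matrix (Fin 3) (Fin 3) ℝ),
    s ⬝ᵥ s = 1 ∧ Rᵀ * R = 1 ∧ R.det = 1 ∧ E = skew s * R

lemma key (A R : Matrix (Fin 3) (Fin 3) ℝ) (hR : Rᵀ * R = 1) (i j : Fin 3) :
    (A * R) i ⬝ᵥ (A * R) j = A i ⬝ᵥ A j := by
  have h1 : R * Rᵀ = 1 := mul_eq_one_comm.mp hR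
  have h2 : (A * R) * (A * R)ᵀ = A * Aᵀ := by
    rw [Matrix.transpose_mul, show A * R * (Rᵀ * Aᵀ) = A * (R * Rᵀ) * Aᵀ by
      simp only [Matrix.mul_assoc], h1, Matrix.mul_one]
  have h3 := congrFun (congrFun h2 i) j
  simp only [Matrix.mul_apply, Matrix.transpose_apply, dotProduct, Fin.sum_univ_three] at h3 ⊢
  linear_combination h3

/-- There is a pair `(E, t)` satisfying the six relaxed constraints such that `E` is not
a normalized essential matrix; hence the relaxed set is a strict superset of the set of
normalized essential matrices. -/
theorem relaxed_set_strict_superset :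
    (∃ (E : Matrix (Fin 3) (Fin 3) ℝ) (t : Fin 3 → ℝ),
      RelaxedConstraints E t ∧ ¬ IsNormalizedEssential E) ∧
    {E : Matrix (Fin 3) (Fin 3) ℝ | IsNormalizedEssential E} ⊂
      {E : Matrix (Fin 3) (Fin 3) ℝ | ∃ t : Fin 3 → ℝ, RelaxedConstraints E t} := by
  set E₀ : Matrix (Fin 3) (Fin 3) ℝ := !![1,0,0;1,0,0;0,0,0] with hE₀
  have hcon : RelaxedConstraints E₀ ![0,0,1] := by
    refine ⟨?_, ?_, ?_, ?_, ?_, ?_⟩ <;>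
      simp [hE₀, dotProduct, Fin.sum_univ_three]
  have hnot : ¬ IsNormalizedEssential E₀ := by
    rintro ⟨s, R, hs, hR, -, hE⟩
    have h22 : E₀ 2 ⬝ᵥ E₀ 2 = skew s 2 ⬝ᵥ skew s 2 := by rw [hE]; exact key _ _ hR 2 2
    have h01 : E₀ 0 ⬝ᵥ E₀ 1 = skew s 0 ⬝ᵥ skew s 1 := by rw [hE]; exact key _ _ hR 0 1
    simp [hE₀, skew, dotProduct, Fin.sum_univ_three] at h22 h01
    nlinarith [sq_nonneg (s 0), sq_nonneg (s 1), h22, h01]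
  refine ⟨⟨E₀, ![0,0,1], hcon, hnot⟩, ?_, ?_⟩
  · rintro E ⟨s, R, hs, hR, -, hE⟩
    refine ⟨s, sub_eq_zero.mpr hs, ?_, ?_, ?_, ?_, ?_⟩ <;>
      · rw [hE, key _ _ hR]
        simp [skew, dotProduct, Fin.sum_univ_three]
        ring
  · intro hsub
    exact hnot (hsub ⟨![0,0,1], hcon⟩)
end

section
/- Let r ∈ ℝ, μ > 0, c̄ > 0, and define g : [0,1] → ℝ by g(w) = w r² + Ψ_{c̄}(w,μ) where Ψ_{c̄}(w,μ) = (μ c̄²/3)(1 − √w)²(1 + 2√w). Then g attains its minimum over [0,1] at w* = (1 − r²/(μ c̄²))² if r² ≤ μ c̄², and at w* = 0 if r² > μ c̄²; that is, g(w*) ≤ g(w) for all w ∈ [0,1]. In particular w* ∈ [0,1]. -/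
/-- Closed-form minimizer of `w ↦ w r² + Ψ_{c̄}(w, μ)` over `[0, 1]`, where
`Ψ_{c̄}(w, μ) = (μ c̄²/3)(1 − √w)²(1 + 2√w)` is the Tukey biweight outlier process:
the minimum is attained at `w* = (1 − r²/(μ c̄²))²` if `r² ≤ μ c̄²`, and at `w* = 0`
otherwise. -/
theorem tukey_weight_update_optimal (r μ cbar : ℝ) (hμ : 0 < μ) (hc : 0 < cbar) :
    let g : ℝ → ℝ := fun w =>
      w * r ^ 2 + μ * cbar ^ 2 / 3 * (1 - Real.sqrt w) ^ 2 * (1 + 2 * Real.sqrt w)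
    let wstar : ℝ :=
      if r ^ 2 ≤ μ * cbar ^ 2 then (1 - r ^ 2 / (μ * cbar ^ 2)) ^ 2 else 0
    wstar ∈ Set.Icc (0 : ℝ) 1 ∧ ∀ w ∈ Set.Icc (0 : ℝ) 1, g wstar ≤ g w := by
  intro g wstar
  have hA : 0 < μ * cbar ^ 2 := by positivity
  by_cases hr : r ^ 2 ≤ μ * cbar ^ 2
  · have hws : wstar = (1 - r ^ 2 / (μ * cbar ^ 2)) ^ 2 := if_pos hr
    set t : ℝ := 1 - r ^ 2 / (μ * cbar ^ 2) with ht
    have ht0 : 0 ≤ t := by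
      rw [ht, sub_nonneg, div_le_one hA]; exact hr
    have ht1 : t ≤ 1 := by
      have : 0 ≤ r ^ 2 / (μ * cbar ^ 2) := by positivity
      rw [ht]; linarith
    have hrA : r ^ 2 = μ * cbar ^ 2 * (1 - t) := by
      rw [ht]; field_simp; ring
    constructor
    · rw [hws]
      exact ⟨by positivity, by nlinarith⟩
    · intro w hw
      have hsq : Real.sqrt wstar = t := by rw [hws, Real.sqrt_sq ht0]
      set s := Real.sqrt w with hsdef
      have hsnn : 0 ≤ s := Real.sqrt_nonneg w
      have hss : s ^ 2 = w := Real.sq_sqrt hw.1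
      simp only [g, hsq, hws, ← hss, Real.sqrt_sq hsnn, Real.sqrt_sq ht0, Real.sqrt_zero]
      have key : s ^ 2 * r ^ 2 + μ * cbar ^ 2 / 3 * (1 - s) ^ 2 * (1 + 2 * s)
          - (t ^ 2 * r ^ 2 + μ * cbar ^ 2 / 3 * (1 - t) ^ 2 * (1 + 2 * t))
          = μ * cbar ^ 2 / 3 * (s - t) ^ 2 * (2 * s + t) := by
        rw [hrA]; ring
      nlinarith [mul_nonneg (mul_nonneg (by positivity : (0:ℝ) ≤ μ * cbar ^ 2 / 3)
        (sq_nonneg (s - t))) (by linarith : (0:ℝ) ≤ 2 * s + t)]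
  · have hws : wstar = 0 := if_neg hr
    push_neg at hr
    constructor
    · rw [hws]; exact ⟨le_refl _, zero_le_one⟩
    · intro w hw
      have hsq : Real.sqrt wstar = 0 := by rw [hws, Real.sqrt_zero]
      set s := Real.sqrt w with hsdef
      have hsnn : 0 ≤ s := Real.sqrt_nonneg w
      have hss : s ^ 2 = w := Real.sq_sqrt hw.1
      simp only [g, hsq, hws, ← hss, Real.sqrt_sq hsnn, Real.sqrt_zero]
      nlinarith [mul_nonneg (sq_nonneg s) (by linarith : (0:ℝ) ≤ r ^ 2 - μ * cbar ^ 2),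
        mul_nonneg (mul_nonneg hA.le hsnn) (sq_nonneg s)]
end

section
/- Let r ∈ ℝ, μ > 0, c̄ > 0. Then min_{w ∈ [0,1]} ( w r² + Ψ_{c̄}(w,μ) ) = μ c̄² · ρ_{c̄}(r,μ), where Ψ_{c̄}(w,μ) = (μ c̄²/3)(1 − √w)²(1 + 2√w) and ρ_{c̄}(r,μ) equals u − u² + u³/3 with u = r²/(μ c̄²) when r² ≤ μ c̄², and equals 1/3 when r² > μ c̄². (This is the Black–Rangarajan duality between the Tukey biweight robust loss and its line process.) -/
/-- Black–Rangarajan duality for the Tukey biweight GNC surrogate: the minimum over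
`w ∈ [0,1]` of `w r² + Ψ_{c̄}(w, μ)`, with outlier process
`Ψ_{c̄}(w, μ) = (μ c̄²/3)(1 − √w)²(1 + 2√w)`, equals `μ c̄² · ρ_{c̄}(r, μ)`, where
`ρ_{c̄}(r, μ) = u − u² + u³/3` with `u = r²/(μ c̄²)` when `r² ≤ μ c̄²`, and `1/3`
otherwise. -/
theorem black_rangarajan_tukey (r μ cbar : ℝ) (hμ : 0 < μ) (hc : 0 < cbar) :
    IsLeast
      ((fun w : ℝ =>
          w * r ^ 2 + μ * cbar ^ 2 / 3 * (1 - Real.sqrt w) ^ 2 * (1 + 2 * Real.sqrt w)) ''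
        Set.Icc (0 : ℝ) 1)
      (μ * cbar ^ 2 *
        if r ^ 2 ≤ μ * cbar ^ 2 then
          r ^ 2 / (μ * cbar ^ 2) - (r ^ 2 / (μ * cbar ^ 2)) ^ 2 +
            (r ^ 2 / (μ * cbar ^ 2)) ^ 3 / 3
        else 1 / 3) := by
  set A : ℝ := μ * cbar ^ 2 with hA
  have hA0 : 0 < A := by positivity
  constructor
  · -- membership
    by_cases h : r ^ 2 ≤ A
    · rw [if_pos h]
      refine ⟨(1 - r ^ 2 / A) ^ 2, ?_, ?_⟩
      · constructor
        · positivity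
        · have h1 : 0 ≤ 1 - r ^ 2 / A := by
            rw [sub_nonneg, div_le_one hA0]; exact h
          have h2 : 1 - r ^ 2 / A ≤ 1 := by
            have : 0 ≤ r ^ 2 / A := by positivity
            linarith
          nlinarith
      · have h1 : 0 ≤ 1 - r ^ 2 / A := by
          rw [sub_nonneg, div_le_one hA0]; exact h
        simp only [Real.sqrt_sq h1]
        field_simp
        ring
    · rw [if_neg h]
      exact ⟨0, ⟨le_refl 0, zero_le_one⟩, by simp; ring⟩
  · -- lower bound
    rintro x ⟨w, ⟨hw0, hw1⟩, rfl⟩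
    simp only
    set s := Real.sqrt w with hs
    have hs0 : 0 ≤ s := Real.sqrt_nonneg w
    have hs1 : s ≤ 1 := by
      rw [hs, show (1:ℝ) = Real.sqrt 1 by simp]
      exact Real.sqrt_le_sqrt hw1
    have hsq : s ^ 2 = w := Real.sq_sqrt hw0
    by_cases h : r ^ 2 ≤ A
    · rw [if_pos h]
      have hkey : 0 ≤ (2 * A / 3) * (s - (1 - r ^ 2 / A)) ^ 2 * (s + (1 - r ^ 2 / A) / 2) := by
        have h1 : 0 ≤ 1 - r ^ 2 / A := by
          rw [sub_nonneg, div_le_one hA0]; exact h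
        positivity
      have hexp : w * r ^ 2 + A / 3 * (1 - s) ^ 2 * (1 + 2 * s) -
          A * (r ^ 2 / A - (r ^ 2 / A) ^ 2 + (r ^ 2 / A) ^ 3 / 3) =
          (2 * A / 3) * (s - (1 - r ^ 2 / A)) ^ 2 * (s + (1 - r ^ 2 / A) / 2) := by
        rw [← hsq]; field_simp; ring
      linarith
    · rw [if_neg h]
      push_neg at h
      have hra : 0 ≤ r ^ 2 - A := by linarith
      have : 0 ≤ s ^ 2 * (r ^ 2 - A) + (2 * A / 3) * s ^ 3 := by positivity
      have hexp : w * r ^ 2 + A / 3 * (1 - s) ^ 2 * (1 + 2 * s) - A * (1 / 3) =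
          s ^ 2 * (r ^ 2 - A) + (2 * A / 3) * s ^ 3 := by
        rw [← hsq]; ring
      linarith
end

section
/- Let f₁,…,f_N, f₁',…,f_N' ∈ ℝ³, C = Σᵢ₌₁ᴺ (fᵢ' ⊗ fᵢ)(fᵢ' ⊗ fᵢ)ᵀ, and let Q ∈ ℝ^{12×12} be the symmetric matrix with Q acting on x = (vec(E), t) ∈ ℝ¹² by xᵀ Q x = vec(E)ᵀ C vec(E) (i.e. C padded with zeros on the t-block). Let A₁, …, A₆ ∈ ℝ^{12×12} be the symmetric matrices of the quadratic forms of the relaxed constraints, so that xᵀ A₁ x = tᵀt, xᵀ A₂ x = e₁ᵀe₁ − (t₂² + t₃²), xᵀ A₃ x = e₂ᵀe₂ − (t₁² + t₃²), xᵀ A₄ x = e₃ᵀe₃ − (t₁² + t₂²), xᵀ A₅ x = e₁ᵀe₃ + t₁t₃, xᵀ A₆ x = e₂ᵀe₃ + t₂t₃, and set c₁ = 1, c₂ = … = c₆ = 0. Suppose Ê = [t̂]× R̂ is a normalized essential matrix (R̂ ∈ SO(3), t̂ᵀt̂ = 1), x̂ = (vec(Ê), t̂), and there exists λ ∈ ℝ⁶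 with Q x̂ = Σᵢ λᵢ Aᵢ x̂ and Q − Σᵢ λᵢ Aᵢ positive semidefinite. Then Ê is a global minimizer of the squared epipolar error over all normalized essential matrices: Σᵢ₌₁ᴺ (fᵢᵀ Ê fᵢ')² ≤ Σᵢ₌₁ᴺ (fᵢᵀ E fᵢ')² for every normalized essential matrix E. -/
open Matrix

/-- Kronecker product of two vectors in `ℝ³`, indexed by pairs `(j, i)`. -/
noncomputable def vkron (a b : Fin 3 → ℝ) : Fin 3 × Fin 3 → ℝ := fun p => a p.1 * b p.2

/-- The data matrix `C = Σᵢ (fᵢ' ⊗ fᵢ)(fᵢ' ⊗ fᵢ)ᵀ` of the relative pose problem. -/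
noncomputable def dataC {N : ℕ} (f f' : Fin N → Fin 3 → ℝ) :
    Matrix (Fin 3 × Fin 3) (Fin 3 × Fin 3) ℝ :=
  ∑ i, vecMulVec (vkron (f' i) (f i)) (vkron (f' i) (f i))

/-- Column-wise vectorization of a `3 × 3` matrix, indexed by pairs `(j, i)`. -/
noncomputable def vec3 (M : Matrix (Fin 3) (Fin 3) ℝ) : Fin 3 × Fin 3 → ℝ :=
  fun p => M p.2 p.1

/-- The `12`-dimensional vector `x = (vec(E), t)`. -/
noncomputable def xvec (E : Matrix (Fin 3) (Fin 3) ℝ) (t : Fin 3 → ℝ) :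
    (Fin 3 × Fin 3) ⊕ Fin 3 → ℝ :=
  Sum.elim (vec3 E) t

/-- The `12 × 12` matrix `Q`: the data matrix `C` padded with zeros on the `t`-block,
so that `xᵀ Q x = vec(E)ᵀ C vec(E)` for `x = (vec(E), t)`. -/
noncomputable def Qmat {N : ℕ} (f f' : Fin N → Fin 3 → ℝ) :
    Matrix ((Fin 3 × Fin 3) ⊕ Fin 3) ((Fin 3 × Fin 3) ⊕ Fin 3) ℝ :=
  Matrix.fromBlocks (dataC f f') 0 0 0

lemma sum_mulVec' {m n ι : Type*} [Fintype n] (s : Finset ι)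
    (M : ι → Matrix m n ℝ) (v : n → ℝ) :
    (∑ i ∈ s, M i) *ᵥ v = ∑ i ∈ s, M i *ᵥ v := by
  ext j
  simp only [mulVec, dotProduct, Matrix.sum_apply, Finset.sum_mul, Finset.sum_apply]
  rw [Finset.sum_comm]

lemma vkron_dot (a b : Fin 3 → ℝ) (E : Matrix (Fin 3) (Fin 3) ℝ) :
    vkron a b ⬝ᵥ vec3 E = b ⬝ᵥ (E *ᵥ a) := by
  simp [dotProduct, vkron, vec3, mulVec, Fintype.sum_prod_type, Finset.mul_sum]
  rw [Finset.sum_comm]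
  congr 1; ext i; congr 1; ext j; ring

lemma quad_eq {N : ℕ} (f f' : Fin N → Fin 3 → ℝ) (E : Matrix (Fin 3) (Fin 3) ℝ)
    (t : Fin 3 → ℝ) :
    xvec E t ⬝ᵥ (Qmat f f' *ᵥ xvec E t) = ∑ i, (f i ⬝ᵥ (E *ᵥ f' i)) ^ 2 := by
  rw [xvec, Qmat, fromBlocks_mulVec]
  simp only [zero_mulVec, add_zero, mulVec_zero, zero_add, sumElim_dotProduct_sumElim,
    dotProduct_zero, add_zero, Sum.elim_comp_inl]
  rw [dataC, sum_mulVec']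
  rw [show vec3 E ⬝ᵥ ∑ i : Fin N, vecMulVec (vkron (f' i) (f i)) (vkron (f' i) (f i)) *ᵥ vec3 E
      = ∑ i : Fin N, vec3 E ⬝ᵥ (vecMulVec (vkron (f' i) (f i)) (vkron (f' i) (f i)) *ᵥ vec3 E) by
    simp only [dotProduct, Finset.sum_apply, Finset.mul_sum]
    rw [Finset.sum_comm]]
  refine Finset.sum_congr rfl fun i _ => ?_
  rw [← vkron_dot (f' i) (f i) E, sq]
  simp only [dotProduct, vecMulVec_apply, mulVec, Finset.sum_mul, Finset.mul_sum]
  rw [Finset.sum_comm]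
  refine Finset.sum_congr rfl fun p _ => Finset.sum_congr rfl fun q _ => by ring

lemma rows_dot (t : Fin 3 → ℝ) (R : Matrix (Fin 3) (Fin 3) ℝ) (hR : Rᵀ * R = 1)
    (a b : Fin 3) :
    (skew t * R) a ⬝ᵥ (skew t * R) b = skew t a ⬝ᵥ skew t b := by
  have hRR : R * Rᵀ = 1 := mul_eq_one_comm.mp (by simpa using hR)
  have h1 : (skew t * R) a ⬝ᵥ (skew t * R) b = ((skew t * R) * (skew t * R)ᵀ) a b := by
    simp [mul_apply, dotProduct, transpose_apply, mul_comm]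
  rw [h1]
  have h2 : (skew t * R) * (skew t * R)ᵀ = skew t * (R * Rᵀ) * (skew t)ᵀ := by
    rw [transpose_mul, mul_assoc, mul_assoc, mul_assoc]
  rw [h2, hRR, mul_one]
  simp [mul_apply, dotProduct, transpose_apply]

lemma dot_sum {n ι : Type*} [Fintype n] (s : Finset ι) (v : n → ℝ) (w : ι → n → ℝ) :
    v ⬝ᵥ ∑ i ∈ s, w i = ∑ i ∈ s, v ⬝ᵥ w i := by
  simp only [dotProduct, Finset.sum_apply, Finset.mul_sum]
  rw [Finset.sum_comm]

/-- If the normalized essential matrix `Ê = [t̂]× R̂` admits Lagrange multipliers `λ`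
with `Q x̂ = Σ λᵢ Aᵢ x̂` and `Q − Σ λᵢ Aᵢ ⪰ 0`, where `A₁, …, A₆` are the symmetric
matrix forms of the relaxed constraints, then `Ê` globally minimizes the squared
epipolar error over all normalized essential matrices. -/
theorem certifier_global_optimality {N : ℕ} (f f' : Fin N → Fin 3 → ℝ)
    (A : Fin 6 → Matrix ((Fin 3 × Fin 3) ⊕ Fin 3) ((Fin 3 × Fin 3) ⊕ Fin 3) ℝ)
    (hAsymm : ∀ i, (A i).IsSymm)
    (hA1 : ∀ (E : Matrix (Fin 3) (Fin 3) ℝ) (t : Fin 3 → ℝ),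
      xvec E t ⬝ᵥ (A 0 *ᵥ xvec E t) = t ⬝ᵥ t)
    (hA2 : ∀ (E : Matrix (Fin 3) (Fin 3) ℝ) (t : Fin 3 → ℝ),
      xvec E t ⬝ᵥ (A 1 *ᵥ xvec E t) = E 0 ⬝ᵥ E 0 - (t 1 ^ 2 + t 2 ^ 2))
    (hA3 : ∀ (E : Matrix (Fin 3) (Fin 3) ℝ) (t : Fin 3 → ℝ),
      xvec E t ⬝ᵥ (A 2 *ᵥ xvec E t) = E 1 ⬝ᵥ E 1 - (t 0 ^ 2 + t 2 ^ 2))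
    (hA4 : ∀ (E : Matrix (Fin 3) (Fin 3) ℝ) (t : Fin 3 → ℝ),
      xvec E t ⬝ᵥ (A 3 *ᵥ xvec E t) = E 2 ⬝ᵥ E 2 - (t 0 ^ 2 + t 1 ^ 2))
    (hA5 : ∀ (E : Matrix (Fin 3) (Fin 3) ℝ) (t : Fin 3 → ℝ),
      xvec E t ⬝ᵥ (A 4 *ᵥ xvec E t) = E 0 ⬝ᵥ E 2 + t 0 * t 2)
    (hA6 : ∀ (E : Matrix (Fin 3) (Fin 3) ℝ) (t : Fin 3 → ℝ),
      xvec E t ⬝ᵥ (A 5 *ᵥ xvec E t) = E 1 ⬝ᵥ E 2 + t 1 * t 2)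
    (Rhat : Matrix (Fin 3) (Fin 3) ℝ) (hRhat : Rhatᵀ * Rhat = 1)
    (hdetRhat : Rhat.det = 1)
    (that : Fin 3 → ℝ) (hthat : that ⬝ᵥ that = 1)
    (lam : Fin 6 → ℝ)
    (hstat : Qmat f f' *ᵥ xvec (skew that * Rhat) that =
      ∑ i, lam i • (A i *ᵥ xvec (skew that * Rhat) that))
    (hpsd : ∀ v : (Fin 3 × Fin 3) ⊕ Fin 3 → ℝ,
      0 ≤ v ⬝ᵥ ((Qmat f f' - ∑ i, lam i • A i) *ᵥ v)) :
    ∀ (R : Matrix (Fin 3) (Fin 3) ℝ) (t : Fin 3 → ℝ),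
      Rᵀ * R = 1 → R.det = 1 → t ⬝ᵥ t = 1 →
      ∑ i, (f i ⬝ᵥ ((skew that * Rhat) *ᵥ f' i)) ^ 2 ≤
        ∑ i, (f i ⬝ᵥ ((skew t * R) *ᵥ f' i)) ^ 2 := by
  intro R t hR hdet htt
  have hconsum : ∀ (R' : Matrix (Fin 3) (Fin 3) ℝ) (t' : Fin 3 → ℝ),
      R'ᵀ * R' = 1 → t' ⬝ᵥ t' = 1 →
      ∑ i, lam i * (xvec (skew t' * R') t' ⬝ᵥ (A i *ᵥ xvec (skew t' * R') t')) = lam 0 := by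
    intro R' t' hR' htt'
    have h00 : (skew t' * R') 0 ⬝ᵥ (skew t' * R') 0 = t' 1 ^ 2 + t' 2 ^ 2 := by
      rw [rows_dot t' R' hR']
      simp [skew, dotProduct, Fin.sum_univ_three]; ring
    have h11 : (skew t' * R') 1 ⬝ᵥ (skew t' * R') 1 = t' 0 ^ 2 + t' 2 ^ 2 := by
      rw [rows_dot t' R' hR']
      simp [skew, dotProduct, Fin.sum_univ_three]; ring
    have h22 : (skew t' * R') 2 ⬝ᵥ (skew t' * R') 2 = t' 0 ^ 2 + t' 1 ^ 2 := by
      rw [rows_dot t' R' hR']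
      simp [skew, dotProduct, Fin.sum_univ_three]; ring
    have h02 : (skew t' * R') 0 ⬝ᵥ (skew t' * R') 2 = -(t' 0 * t' 2) := by
      rw [rows_dot t' R' hR']
      simp [skew, dotProduct, Fin.sum_univ_three]; ring
    have h12 : (skew t' * R') 1 ⬝ᵥ (skew t' * R') 2 = -(t' 1 * t' 2) := by
      rw [rows_dot t' R' hR']
      simp [skew, dotProduct, Fin.sum_univ_three]; ring
    rw [Fin.sum_univ_six, hA1, hA2, hA3, hA4, hA5, hA6, htt', h00, h11, h22, h02, h12]
    ring
  have hhat : xvec (skew that * Rhat) that ⬝ᵥ (Qmat f f' *ᵥ xvec (skew that * Rhat) that)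
      = lam 0 := by
    rw [hstat, dot_sum]
    simp only [dotProduct_smul, smul_eq_mul]
    exact hconsum Rhat that hRhat hthat
  have hlb : lam 0 ≤ xvec (skew t * R) t ⬝ᵥ (Qmat f f' *ᵥ xvec (skew t * R) t) := by
    have h := hpsd (xvec (skew t * R) t)
    rw [sub_mulVec, dotProduct_sub, sum_mulVec', dot_sum] at h
    simp only [smul_mulVec, dotProduct_smul, smul_eq_mul] at h
    rw [hconsum R t hR htt] at h
    linarith
  calc ∑ i, (f i ⬝ᵥ ((skew that * Rhat) *ᵥ f' i)) ^ 2
      = lam 0 := by rw [← quad_eq f f', hhat]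
    _ ≤ xvec (skew t * R) t ⬝ᵥ (Qmat f f' *ᵥ xvec (skew t * R) t) := hlb
    _ = ∑ i, (f i ⬝ᵥ ((skew t * R) *ᵥ f' i)) ^ 2 := quad_eq f f' _ _
end
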